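/- For the sublevel sets V(τ) := { x ∈ Ω̄ : v(x) < τ } and all 0 < s ≤ t the following hold: V(s) is nonempty, V(s) ⊆ V(t), every x ∈ V(t) satisfies dist(x, V(s)) ≤ (t − s)/σ_*, and hence the Hausdorff distance between V(t) and V(s) is at most (t − s)/σ_*. -/

import Mathlib

open Set Metric MeasureTheory

noncomputable section

abbrev Euc (n : ℕ) := EuclideanSpace ℝ (Fin n)

/-- An admissible curve for the point `x`: a Lipschitz curve `γ : [0,1] → ℝⁿ` with values
in `Ω̄`, starting in `V̄₀` and ending at `x`. -/
def IsAdmissible {n : ℕ} (Ω V₀ : Set (Euc n)) (x : Euc n) (γ : ℝ → Euc n) : Prop :=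
  (∃ K : NNReal, LipschitzWith K γ) ∧ (∀ s ∈ Icc (0:ℝ) 1, γ s ∈ Ω) ∧ γ 0 ∈ V₀ ∧ γ 1 = x

/-- The cost of a curve: `∫₀¹ σ(γ(s), γ′(s)) ds`. -/
def curveCost {n : ℕ} (σ : Euc n → Euc n → ℝ) (γ : ℝ → Euc n) : ℝ :=
  ∫ s in (0:ℝ)..1, σ (γ s) (deriv γ s)

/-- The time-of-attachment function: infimum of costs over admissible curves. -/
def timeOfAttachment {n : ℕ} (Ω V₀ : Set (Euc n)) (σ : Euc n → Euc n → ℝ) (x : Euc n) : ℝ :=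
  sInf (curveCost σ '' {γ : ℝ → Euc n | IsAdmissible Ω V₀ x γ})

/-- The geodesic distance on `Ω̄`. -/
def geodDist {n : ℕ} (Ω : Set (Euc n)) (x y : Euc n) : ℝ :=
  sInf {L : ℝ | ∃ γ : ℝ → Euc n, (∃ K : NNReal, LipschitzWith K γ) ∧
    (∀ s ∈ Icc (0:ℝ) 1, γ s ∈ Ω) ∧ γ 0 = y ∧ γ 1 = x ∧
    L = ∫ s in (0:ℝ)..1, ‖deriv γ s‖}

open Filter Topology intervalIntegral

section AuxLemmas

variable {E : Type*} [NormedAddCommGroup E] [NormedSpace ℝ E] [FiniteDimensional ℝ E]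
  [MeasurableSpace E] [BorelSpace E]

omit [FiniteDimensional ℝ E] [MeasurableSpace E] [BorelSpace E] in
lemma aux_norm_deriv_le {γ : ℝ → E} {K : NNReal} (hγ : LipschitzWith K γ) (u : ℝ) :
    ‖deriv γ u‖ ≤ K := by
  have h1 : deriv γ u = fderiv ℝ γ u 1 := (fderiv_apply_one_eq_deriv).symm
  rw [h1]
  calc ‖fderiv ℝ γ u 1‖ ≤ ‖fderiv ℝ γ u‖ * ‖(1:ℝ)‖ := (fderiv ℝ γ u).le_opNorm 1
    _ ≤ K * 1 := by
        rw [norm_one]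
        exact mul_le_mul_of_nonneg_right (norm_fderiv_le_of_lipschitz ℝ hγ) zero_le_one
    _ = K := mul_one _

omit [MeasurableSpace E] [BorelSpace E] in
lemma aux_norm_sub_le_integral {γ : ℝ → E} {K : NNReal}
    (hγ : LipschitzWith K γ) {a b : ℝ} (hab : a ≤ b) :
    ‖γ b - γ a‖ ≤ ∫ u in a..b, ‖deriv γ u‖ := by
  have γc : Continuous γ := hγ.continuous
  set F : ℝ → E := fun x => ∫ u in a..x, γ u with hF
  have hFd : ∀ x : ℝ, HasDerivAt F (γ x) x := fun x =>
    integral_hasDerivAt_right (γc.intervalIntegrable a x)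
      (γc.stronglyMeasurable.stronglyMeasurableAtFilter) γc.continuousAt
  set hk : ℕ → ℝ := fun k => ((k : ℝ) + 1)⁻¹ with hhk
  have hkpos : ∀ k, 0 < hk k := fun k => by positivity
  have hk_to : Tendsto hk atTop (𝓝 0) := by
    simpa [hhk, one_div] using tendsto_one_div_add_atTop_nhds_zero_nat (𝕜 := ℝ)
  have key : ∀ x : ℝ, Tendsto (fun k => (hk k)⁻¹ • (F (x + hk k) - F x)) atTop (𝓝 (γ x)) := by
    intro x
    have h1 := hasDerivAt_iff_tendsto_slope.1 (hFd x)
    have h2 : Tendsto (fun k => x + hk k) atTop (𝓝[≠] x) := by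
      apply tendsto_nhdsWithin_of_tendsto_nhds_of_eventually_within
      · simpa using tendsto_const_nhds.add hk_to
      · filter_upwards with k
        simp only [mem_compl_iff, mem_singleton_iff]
        have := hkpos k
        intro h; nlinarith [congrArg (fun z => z - x) h]
    have h3 := h1.comp h2
    refine h3.congr fun k => ?_
    simp only [Function.comp, slope_def_module]
    congr 1
    ring
  have keysub : Tendsto (fun k => (hk k)⁻¹ • (F (b + hk k) - F b) - (hk k)⁻¹ • (F (a + hk k) - F a))
      atTop (𝓝 (γ b - γ a)) := (key b).sub (key a)
  have htend : ∀ x : ℝ, Tendsto (fun k => x + hk k) atTop (𝓝[≠] x) := by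
    intro x
    apply tendsto_nhdsWithin_of_tendsto_nhds_of_eventually_within
    · simpa using tendsto_const_nhds.add hk_to
    · filter_upwards with k
      simp only [mem_compl_iff, mem_singleton_iff]
      have := hkpos k
      intro h; nlinarith [congrArg (fun z => z - x) h]
  have hAeq : ∀ k, (∫ u in a..b, (γ (u + hk k) - γ u)) =
      (F (b + hk k) - F b) - (F (a + hk k) - F a) := by
    intro k
    have h1 : (∫ u in a..b, γ (u + hk k)) = ∫ u in (a + hk k)..(b + hk k), γ u :=
      integral_comp_add_right γ (hk k)
    have h2 : (∫ u in a..b, (γ (u + hk k) - γ u))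
        = (∫ u in a..b, γ (u + hk k)) - ∫ u in a..b, γ u :=
      integral_sub ((γc.comp (continuous_add_right _)).intervalIntegrable _ _)
        (γc.intervalIntegrable _ _)
    have h3 : F (b + hk k) - F (a + hk k) = ∫ u in (a + hk k)..(b + hk k), γ u :=
      integral_interval_sub_left (γc.intervalIntegrable _ _) (γc.intervalIntegrable _ _)
    have h4 : F a = (0 : E) := integral_same
    rw [h2, h1, ← h3, h4]
    have h5 : F b = ∫ u in a..b, γ u := rfl
    rw [h5]; abel
  have hGlim : Tendsto (fun k => ‖(hk k)⁻¹ • (∫ u in a..b, (γ (u + hk k) - γ u))‖) atTop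
      (𝓝 ‖γ b - γ a‖) := by
    have h1 : Tendsto (fun k => (hk k)⁻¹ • (∫ u in a..b, (γ (u + hk k) - γ u))) atTop
        (𝓝 (γ b - γ a)) := by
      refine keysub.congr fun k => ?_
      rw [← smul_sub, hAeq k]
    exact (continuous_norm.tendsto _).comp h1
  set Fk : ℕ → ℝ → ℝ := fun k u => (hk k)⁻¹ * ‖γ (u + hk k) - γ u‖ with hFk
  have hmeas : ∀ k, AEStronglyMeasurable (Fk k) (volume.restrict (Ioc a b)) := fun k =>
    (continuous_const.mul (((γc.comp (continuous_add_right _)).sub γc).norm)).aestronglyMeasurable.restrict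
  have hbound : ∀ k, ∀ᵐ u ∂(volume.restrict (Ioc a b)), ‖Fk k u‖ ≤ (K : ℝ) := by
    intro k
    filter_upwards with u
    have h1 : ‖γ (u + hk k) - γ u‖ ≤ (K : ℝ) * hk k := by
      have h := hγ.dist_le_mul (u + hk k) u
      rw [dist_eq_norm] at h
      have h2 : dist (u + hk k) u = hk k := by
        rw [Real.dist_eq]; simp [abs_of_pos (hkpos k)]
      rw [h2] at h; exact h
    rw [Real.norm_eq_abs, abs_of_nonneg (by positivity)]
    calc (hk k)⁻¹ * ‖γ (u + hk k) - γ u‖ ≤ (hk k)⁻¹ * ((K : ℝ) * hk k) :=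
          mul_le_mul_of_nonneg_left h1 (inv_nonneg.2 (hkpos k).le)
      _ = (K : ℝ) := by field_simp; exact mul_div_cancel_left₀ _ (hkpos k).ne'
  have hlim : ∀ᵐ u ∂(volume.restrict (Ioc a b)),
      Tendsto (fun k => Fk k u) atTop (𝓝 ‖deriv γ u‖) := by
    apply ae_restrict_of_ae
    filter_upwards [hγ.ae_differentiableAt] with u hu
    have h1 := hasDerivAt_iff_tendsto_slope.1 hu.hasDerivAt
    have h3 := (continuous_norm.tendsto _).comp (h1.comp (htend u))
    refine h3.congr fun k => ?_
    simp only [Function.comp, slope_def_module]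
    rw [norm_smul, Real.norm_eq_abs, add_sub_cancel_left,
      abs_of_nonneg (inv_nonneg.2 (hkpos k).le)]
  have hint_const : Integrable (fun _ : ℝ => (K : ℝ)) (volume.restrict (Ioc a b)) :=
    integrableOn_const measure_Ioc_lt_top.ne
  have hDCT := tendsto_integral_of_dominated_convergence (fun _ => (K : ℝ)) hmeas hint_const
    hbound hlim
  have hker : ∀ k, ‖(hk k)⁻¹ • (∫ u in a..b, (γ (u + hk k) - γ u))‖ ≤ ∫ u in Ioc a b, Fk k u := by
    intro k
    rw [norm_smul, Real.norm_eq_abs, abs_of_nonneg (inv_nonneg.2 (hkpos k).le)]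
    have h1 : ‖∫ u in a..b, (γ (u + hk k) - γ u)‖ ≤ ∫ u in a..b, ‖γ (u + hk k) - γ u‖ :=
      intervalIntegral.norm_integral_le_integral_norm hab
    calc (hk k)⁻¹ * ‖∫ u in a..b, (γ (u + hk k) - γ u)‖
        ≤ (hk k)⁻¹ * ∫ u in a..b, ‖γ (u + hk k) - γ u‖ :=
          mul_le_mul_of_nonneg_left h1 (inv_nonneg.2 (hkpos k).le)
      _ = ∫ u in a..b, Fk k u := by rw [← intervalIntegral.integral_const_mul]
      _ = ∫ u in Ioc a b, Fk k u := integral_of_le hab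
  have hfin := le_of_tendsto_of_tendsto' hGlim hDCT hker
  rwa [integral_of_le hab]

end AuxLemmas

lemma aux_integrand_integrableOn {n : ℕ} {σ : Euc n → Euc n → ℝ} {Ω : Set (Euc n)}
    (hΩcl : IsClosed Ω)
    (hσcont : ContinuousOn (fun p : Euc n × Euc n => σ p.1 p.2) (Ω ×ˢ (univ : Set (Euc n))))
    {σl σu : ℝ} (hσbound : ∀ x ∈ Ω, ∀ q, σl * ‖q‖ ≤ σ x q ∧ σ x q ≤ σu * ‖q‖)
    (hσl : 0 ≤ σl) (hσu : 0 ≤ σu)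
    {γ : ℝ → Euc n} {K : NNReal} (hγ : LipschitzWith K γ)
    (hmem : ∀ s ∈ Icc (0:ℝ) 1, γ s ∈ Ω) :
    IntegrableOn (fun u => σ (γ u) (deriv γ u)) (Icc (0:ℝ) 1) := by
  set proj : ℝ → ℝ := fun u => max (min u 1) 0 with hproj
  have hprojmem : ∀ u, proj u ∈ Icc (0:ℝ) 1 := fun u =>
    ⟨le_max_right _ _, max_le (min_le_right _ _) zero_le_one⟩
  have hprojlip : LipschitzWith 1 proj := by
    simpa using ((LipschitzWith.id (α := ℝ)).min_const 1).max_const 0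
  have hγ' : LipschitzWith (K * 1) (γ ∘ proj) := hγ.comp hprojlip
  have hmem' : ∀ u, (γ ∘ proj) u ∈ Ω := fun u => hmem _ (hprojmem u)
  have hS : MeasurableSet (Ω ×ˢ (univ : Set (Euc n))) :=
    (hΩcl.prod isClosed_univ).measurableSet
  have hm : Measurable (fun u : ℝ => (((γ ∘ proj) u, deriv (γ ∘ proj) u) : Euc n × Euc n)) :=
    (hγ'.continuous.measurable).prodMk (measurable_deriv _)
  have hmS : Measurable (fun u : ℝ =>
      (⟨((γ ∘ proj) u, deriv (γ ∘ proj) u), ⟨hmem' u, mem_univ _⟩⟩ :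
        (Ω ×ˢ (univ : Set (Euc n))))) := hm.subtype_mk
  have hg' : Measurable (fun u : ℝ => σ ((γ ∘ proj) u) (deriv (γ ∘ proj) u)) :=
    (hσcont.restrict.measurable).comp hmS
  have hb : ∀ u : ℝ, ‖σ ((γ ∘ proj) u) (deriv (γ ∘ proj) u)‖ ≤ σu * ((K : ℝ) * 1) := by
    intro u
    have h1 := (hσbound _ (hmem' u) (deriv (γ ∘ proj) u)).1
    have h2 := (hσbound _ (hmem' u) (deriv (γ ∘ proj) u)).2
    have h3 : ‖deriv (γ ∘ proj) u‖ ≤ ((K * 1 : NNReal) : ℝ) := aux_norm_deriv_le hγ' u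
    have h4 : (0:ℝ) ≤ σl * ‖deriv (γ ∘ proj) u‖ := mul_nonneg hσl (norm_nonneg _)
    rw [Real.norm_eq_abs, abs_of_nonneg (le_trans h4 h1)]
    calc σ ((γ ∘ proj) u) (deriv (γ ∘ proj) u) ≤ σu * ‖deriv (γ ∘ proj) u‖ := h2
      _ ≤ σu * ((K : ℝ) * 1) := by
          apply mul_le_mul_of_nonneg_left _ hσu
          simpa using h3
  have hOne : IntegrableOn (fun u => σ ((γ ∘ proj) u) (deriv (γ ∘ proj) u)) (Ioo (0:ℝ) 1) :=
    ⟨hg'.aestronglyMeasurable.restrict,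
      HasFiniteIntegral.restrict_of_bounded (C := σu * ((K : ℝ) * 1)) measure_Ioo_lt_top
        (ae_of_all _ hb)⟩
  have hEq : EqOn (fun u => σ ((γ ∘ proj) u) (deriv (γ ∘ proj) u))
      (fun u => σ (γ u) (deriv γ u)) (Ioo (0:ℝ) 1) := by
    intro u hu
    have hev : (γ ∘ proj) =ᶠ[nhds u] γ := by
      filter_upwards [isOpen_Ioo.mem_nhds hu] with w hw
      simp only [Function.comp, hproj, min_eq_left hw.2.le, max_eq_left hw.1.le]
    have h1 : (γ ∘ proj) u = γ u := hev.eq_of_nhds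
    have h2 : deriv (γ ∘ proj) u = deriv γ u := hev.deriv_eq
    simp only [h1, h2]
  have h2 : IntegrableOn (fun u => σ (γ u) (deriv γ u)) (Ioo (0:ℝ) 1) :=
    hOne.congr_fun hEq measurableSet_Ioo
  rwa [integrableOn_Icc_iff_integrableOn_Ioo]

/-- The sublevel sets V(τ) = {x ∈ Ω̄ : v(x) < τ} are nonempty, nested,
every point of V(t) is within distance (t−s)/σ_* of V(s), and hence the Hausdorff
distance between V(t) and V(s) is at most (t−s)/σ_*. -/
theorem sublevel_sets_hausdorff_lipschitz
    {n : ℕ} (hn : 1 ≤ n)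
    (Ω V₀ : Set (Euc n)) (hΩne : Ω.Nonempty) (hΩcl : IsClosed Ω)
    (hV₀ne : V₀.Nonempty) (hV₀cl : IsClosed V₀) (hV₀sub : V₀ ⊆ Ω)
    (σl σu : ℝ) (hσl : 0 < σl) (hσlu : σl ≤ σu)
    (σ : Euc n → Euc n → ℝ)
    (hσcont : ContinuousOn (fun p : Euc n × Euc n => σ p.1 p.2) (Ω ×ˢ (univ : Set (Euc n))))
    (hσbound : ∀ x ∈ Ω, ∀ q : Euc n, σl * ‖q‖ ≤ σ x q ∧ σ x q ≤ σu * ‖q‖)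
    (hadm : ∀ x ∈ Ω, ∃ γ : ℝ → Euc n, IsAdmissible Ω V₀ x γ)
    (v : Euc n → ℝ) (hvnonneg : ∀ x ∈ Ω, 0 ≤ v x)
    (hv : ∀ x ∈ Ω, v x = timeOfAttachment Ω V₀ σ x) :
    ∀ s t : ℝ, 0 < s → s ≤ t →
      {x ∈ Ω | v x < s}.Nonempty ∧
      {x ∈ Ω | v x < s} ⊆ {x ∈ Ω | v x < t} ∧
      (∀ x ∈ {x ∈ Ω | v x < t}, infDist x {x ∈ Ω | v x < s} ≤ (t - s) / σl) ∧
      hausdorffDist {x ∈ Ω | v x < t} {x ∈ Ω | v x < s} ≤ (t - s) / σl := by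
  intro s t hs hst
  simp only [timeOfAttachment] at hv
  have costset_nonneg : ∀ x : Euc n,
      ∀ c ∈ curveCost σ '' {γ : ℝ → Euc n | IsAdmissible Ω V₀ x γ}, 0 ≤ c := by
    rintro x c ⟨γ, hγ, rfl⟩
    obtain ⟨⟨K, hK⟩, hmem, h0, h1⟩ := hγ
    apply intervalIntegral.integral_nonneg zero_le_one
    intro u hu
    have h := (hσbound _ (hmem u hu) (deriv γ u)).1
    have h2 : (0:ℝ) ≤ σl * ‖deriv γ u‖ := mul_nonneg hσl.le (norm_nonneg _)
    linarith
  have bdd : ∀ x : Euc n, BddBelow (curveCost σ '' {γ : ℝ → Euc n | IsAdmissible Ω V₀ x γ}) :=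
    fun x => ⟨0, fun c hc => costset_nonneg x c hc⟩
  have hv_le : ∀ x ∈ Ω, ∀ γ : ℝ → Euc n, IsAdmissible Ω V₀ x γ → v x ≤ curveCost σ γ := by
    intro x hx γ hγ
    rw [hv x hx]
    exact csInf_le (bdd x) ⟨γ, hγ, rfl⟩
  obtain ⟨x₀, hx₀⟩ := hV₀ne
  have hx₀Ω : x₀ ∈ Ω := hV₀sub hx₀
  have hσ0 : ∀ y ∈ Ω, σ y 0 = 0 := by
    intro y hy
    have h := hσbound y hy 0
    simp only [norm_zero, mul_zero] at h
    linarith [h.1, h.2]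
  have hconst : IsAdmissible Ω V₀ x₀ (fun _ => x₀) :=
    ⟨⟨0, LipschitzWith.const x₀⟩, fun _ _ => hx₀Ω, hx₀, rfl⟩
  have hcost0 : curveCost σ (fun _ : ℝ => x₀) = 0 := by
    unfold curveCost
    have h : ∀ u : ℝ, σ ((fun _ : ℝ => x₀) u) (deriv (fun _ : ℝ => x₀) u) = 0 := by
      intro u
      rw [deriv_const]
      exact hσ0 x₀ hx₀Ω
    simp only [h, intervalIntegral.integral_zero]
  have hvx₀ : v x₀ < s := lt_of_le_of_lt (hcost0 ▸ hv_le x₀ hx₀Ω _ hconst) hs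
  have hVsne : {x ∈ Ω | v x < s}.Nonempty := ⟨x₀, hx₀Ω, hvx₀⟩
  have hsub : {x ∈ Ω | v x < s} ⊆ {x ∈ Ω | v x < t} := fun y hy =>
    ⟨hy.1, lt_of_lt_of_le hy.2 hst⟩
  have hquot : 0 ≤ (t - s) / σl := div_nonneg (by linarith) hσl.le
  have hmain : ∀ x ∈ {x ∈ Ω | v x < t}, infDist x {x ∈ Ω | v x < s} ≤ (t - s) / σl := by
    rintro x ⟨hxΩ, hxv⟩
    rcases lt_or_ge (v x) s with hvs | hvs
    · have hx : x ∈ {x ∈ Ω | v x < s} := ⟨hxΩ, hvs⟩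
      have h := infDist_le_dist_of_mem (x := x) hx
      rw [dist_self] at h
      linarith
    · have hforall : ∀ δ : ℝ, 0 < δ → infDist x {x ∈ Ω | v x < s} ≤ (t - s) / σl + δ := by
        intro δ hδ
        set ε := min (s / 2) (δ * σl) with hε
        have hεpos : 0 < ε := lt_min (by linarith) (mul_pos hδ hσl)
        have hεs : ε < s := lt_of_le_of_lt (min_le_left _ _) (by linarith)
        have hεδ : ε ≤ δ * σl := min_le_right _ _
        have hne : (curveCost σ '' {γ : ℝ → Euc n | IsAdmissible Ω V₀ x γ}).Nonempty := by
          obtain ⟨γ₀, hγ₀⟩ := hadm x hxΩ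
          exact ⟨_, ⟨γ₀, hγ₀, rfl⟩⟩
        have hlt : sInf (curveCost σ '' {γ : ℝ → Euc n | IsAdmissible Ω V₀ x γ}) < t := by
          rw [← hv x hxΩ]; exact hxv

        obtain ⟨c, ⟨γ, hγadm, rfl⟩, hct⟩ := exists_lt_of_csInf_lt hne hlt
        have hsc : s ≤ curveCost σ γ := le_trans hvs (hv_le x hxΩ γ hγadm)
        obtain ⟨⟨K, hK⟩, hmemΩ, hγ0, hγ1⟩ := hγadm
        set g : ℝ → ℝ := fun u => σ (γ u) (deriv γ u) with hg
        have hgint : IntegrableOn g (Icc (0:ℝ) 1) :=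
          aux_integrand_integrableOn hΩcl hσcont hσbound hσl.le (le_trans hσl.le hσlu) hK hmemΩ
        have hgII : ∀ a b : ℝ, 0 ≤ a → a ≤ b → b ≤ 1 → IntervalIntegrable g volume a b := by
          intro a b ha hab hb
          rw [intervalIntegrable_iff_integrableOn_Ioc_of_le hab]
          exact hgint.mono_set (fun u hu => ⟨le_trans ha hu.1.le, le_trans hu.2 hb⟩)
        set f : ℝ → ℝ := fun r => ∫ u in (0:ℝ)..r, g u with hf
        have hfc : ContinuousOn f (Icc (0:ℝ) 1) := by
          have h := intervalIntegral.continuousOn_primitive_interval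
            (a := (0:ℝ)) (b := (1:ℝ)) (μ := volume) (f := g)
            (by rwa [uIcc_of_le zero_le_one])
          rwa [uIcc_of_le zero_le_one] at h
        have hf0 : f 0 = 0 := intervalIntegral.integral_same
        have hf1 : f 1 = curveCost σ γ := rfl
        have hmemv : s - ε ∈ Icc (f 0) (f 1) := by
          rw [hf0, hf1]; constructor <;> linarith
        obtain ⟨r, hrI, hfr⟩ := intermediate_value_Icc zero_le_one hfc hmemv
        set γr : ℝ → Euc n := fun u => γ (min u r) with hγr
        have hlipmin : LipschitzWith 1 (fun u : ℝ => min u r) := by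
          simpa using (LipschitzWith.id (α := ℝ)).min_const r
        have hKr : LipschitzWith (K * 1) γr := hK.comp hlipmin
        have hmemr : ∀ u ∈ Icc (0:ℝ) 1, γr u ∈ Ω := by
          intro u hu
          exact hmemΩ _ ⟨le_min hu.1 hrI.1, le_trans (min_le_left _ _) hu.2⟩
        have hγradm : IsAdmissible Ω V₀ (γ r) γr := by
          refine ⟨⟨K * 1, hKr⟩, hmemr, ?_, ?_⟩
          · show γ (min 0 r) ∈ V₀
            rw [min_eq_left hrI.1]; exact hγ0
          · show γ (min 1 r) = γ r
            rw [min_eq_right hrI.2]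
        set gr : ℝ → ℝ := fun u => σ (γr u) (deriv γr u) with hgr
        have hgrint : IntegrableOn gr (Icc (0:ℝ) 1) :=
          aux_integrand_integrableOn hΩcl hσcont hσbound hσl.le (le_trans hσl.le hσlu) hKr hmemr
        have hgrII : ∀ a b : ℝ, 0 ≤ a → a ≤ b → b ≤ 1 → IntervalIntegrable gr volume a b := by
          intro a b ha hab hb
          rw [intervalIntegrable_iff_integrableOn_Ioc_of_le hab]
          exact hgrint.mono_set (fun u hu => ⟨le_trans ha hu.1.le, le_trans hu.2 hb⟩)
        have hner : ∀ᵐ u : ℝ, u ≠ r := by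
          rw [ae_iff]
          have h : {u : ℝ | ¬u ≠ r} = {r} := by ext u; simp
          rw [h]
          exact measure_singleton r
        have heq1 : (∫ u in (0:ℝ)..r, gr u) = ∫ u in (0:ℝ)..r, g u := by
          apply intervalIntegral.integral_congr_ae
          filter_upwards [hner] with u hu hmem'
          rw [uIoc_of_le hrI.1] at hmem'
          have hur : u < r := lt_of_le_of_ne hmem'.2 hu
          have hev : γr =ᶠ[nhds u] γ := by
            filter_upwards [isOpen_Iio.mem_nhds hur] with w hw
            simp only [hγr, min_eq_left (le_of_lt (mem_Iio.1 hw))]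
          simp only [hgr, hg, hev.eq_of_nhds, hev.deriv_eq]
        have heq2 : (∫ u in r..(1:ℝ), gr u) = 0 := by
          have h : (∫ u in r..(1:ℝ), gr u) = ∫ u in r..(1:ℝ), (0:ℝ) := by
            apply intervalIntegral.integral_congr_ae
            apply ae_of_all
            intro u hmem'
            rw [uIoc_of_le hrI.2] at hmem'
            have hur : r < u := hmem'.1
            have hev : γr =ᶠ[nhds u] (fun _ => γ r) := by
              filter_upwards [isOpen_Ioi.mem_nhds hur] with w hw
              simp only [hγr, min_eq_right (le_of_lt (mem_Ioi.1 hw))]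
            have h1 : γr u = γ r := hev.eq_of_nhds
            have h2 : deriv γr u = 0 := by rw [hev.deriv_eq, deriv_const]
            simp only [hgr, h1, h2]
            exact hσ0 _ (hmemΩ _ hrI)
          rw [h, intervalIntegral.integral_zero]
        have hcostr : curveCost σ γr = s - ε := by
          have hsplit : (∫ u in (0:ℝ)..r, gr u) + (∫ u in r..(1:ℝ), gr u)
              = ∫ u in (0:ℝ)..1, gr u :=
            intervalIntegral.integral_add_adjacent_intervals (hgrII 0 r le_rfl hrI.1 hrI.2)
              (hgrII r 1 hrI.1 hrI.2 le_rfl)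
          have h : curveCost σ γr = ∫ u in (0:ℝ)..1, gr u := rfl
          rw [h, ← hsplit, heq1, heq2, add_zero]
          exact hfr
        have hyVs : γ r ∈ {x ∈ Ω | v x < s} := by
          refine ⟨hmemΩ _ hrI, ?_⟩
          have h := hv_le (γ r) (hmemΩ _ hrI) γr hγradm
          rw [hcostr] at h
          linarith
        have hd1 : dist x (γ r) ≤ ∫ u in r..(1:ℝ), ‖deriv γ u‖ := by
          rw [← hγ1, dist_eq_norm]
          exact aux_norm_sub_le_integral hK hrI.2
        have hdnII : ∀ a b : ℝ, IntervalIntegrable (fun u => ‖deriv γ u‖) volume a b := by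
          intro a b
          rw [intervalIntegrable_iff]
          refine ⟨(measurable_deriv γ).norm.aestronglyMeasurable.restrict,
            HasFiniteIntegral.restrict_of_bounded (C := (K : ℝ)) ?_ (ae_of_all _ fun u => ?_)⟩
          · exact measure_Ioc_lt_top
          · rw [norm_norm]; exact aux_norm_deriv_le hK u
        have hmono : (∫ u in r..(1:ℝ), σl * ‖deriv γ u‖) ≤ ∫ u in r..(1:ℝ), g u := by
          apply intervalIntegral.integral_mono_on hrI.2 ((hdnII r 1).const_mul σl)
            (hgII r 1 hrI.1 hrI.2 le_rfl)
          intro u hu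
          exact (hσbound _ (hmemΩ u ⟨le_trans hrI.1 hu.1, hu.2⟩) _).1
        have htail : (∫ u in r..(1:ℝ), g u) = curveCost σ γ - (s - ε) := by
          have hsplit : (∫ u in (0:ℝ)..r, g u) + (∫ u in r..(1:ℝ), g u)
              = ∫ u in (0:ℝ)..1, g u :=
            intervalIntegral.integral_add_adjacent_intervals (hgII 0 r le_rfl hrI.1 hrI.2)
              (hgII r 1 hrI.1 hrI.2 le_rfl)
          have h1 : (∫ u in (0:ℝ)..1, g u) = curveCost σ γ := rfl
          have h2 : (∫ u in (0:ℝ)..r, g u) = s - ε := hfr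
          linarith
        have hkey : σl * dist x (γ r) ≤ curveCost σ γ - s + ε := by
          have h1 : σl * dist x (γ r) ≤ σl * ∫ u in r..(1:ℝ), ‖deriv γ u‖ :=
            mul_le_mul_of_nonneg_left hd1 hσl.le
          rw [← intervalIntegral.integral_const_mul] at h1
          linarith
        have hdist : dist x (γ r) ≤ (t - s) / σl + δ := by
          have h2 : σl * dist x (γ r) ≤ (t - s) + δ * σl := by
            have h3 : curveCost σ γ - s + ε ≤ t - s + δ * σl := by linarith
            linarith
          have h3 : dist x (γ r) ≤ ((t - s) + δ * σl) / σl := by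
            rw [le_div_iff₀ hσl]
            nlinarith
          have h4 : ((t - s) + δ * σl) / σl = (t - s) / σl + δ := by
            field_simp
          linarith
        exact le_trans (infDist_le_dist_of_mem hyVs) hdist
      by_contra hcon
      push_neg at hcon
      have h := hforall ((infDist x {x ∈ Ω | v x < s} - (t - s) / σl) / 2) (by linarith)
      linarith
  refine ⟨hVsne, hsub, hmain, ?_⟩
  apply hausdorffDist_le_of_infDist hquot hmain
  intro y hy
  have h1 := infDist_le_dist_of_mem (x := y) (hsub hy)
  rw [dist_self] at h1
  linarith
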